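/- In IMG(z²+i) with x = [a,b], y = [b,c], z = aya, t = cxcy⁻¹x⁻¹, w = ata, the following conjugation relations hold: axa = x⁻¹, bxb = x⁻¹, cxc = txy, aya = z, byb = y⁻¹, cyc = y⁻¹, aza = y, bzb = x⁻¹z⁻¹x, czc = z, ata = w, btb = x⁻¹t⁻¹x, ctc = t⁻¹, awa = t, bwb = w⁻¹, cwc = w. -/

import Mathlib

/-- The generator `a = (1,1)σ` of `IMG(z²+i)`, acting on the binary rooted tree
whose vertices are finite binary words. -/
def aF : List Bool → List Bool
  | [] => []
  | x :: s => (!x) :: s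

mutual
/-- The generator `b = (a, c)` of `IMG(z²+i)`. -/
def bF : List Bool → List Bool
  | [] => []
  | false :: s => false :: aF s
  | true :: s => true :: cF s
/-- The generator `c = (b, 1)` of `IMG(z²+i)`. -/
def cF : List Bool → List Bool
  | [] => []
  | false :: s => false :: bF s
  | true :: s => true :: s
end

theorem aF_invol : ∀ s, aF (aF s) = s := by
  intro s; cases s <;> simp [aF]

theorem bcF_invol : ∀ s, bF (bF s) = s ∧ cF (cF s) = s := by
  intro s
  induction s with
  | nil => exact ⟨rfl, rfl⟩
  | cons x s ih =>
    cases x <;> exact ⟨by simp [bF, ih.1, ih.2, aF_invol], by simp [cF, ih.1]⟩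

/-- `a` as a tree automorphism. -/
def aE : Equiv.Perm (List Bool) := ⟨aF, aF, aF_invol, aF_invol⟩
/-- `b` as a tree automorphism. -/
def bE : Equiv.Perm (List Bool) := ⟨bF, bF, fun s => (bcF_invol s).1, fun s => (bcF_invol s).1⟩
/-- `c` as a tree automorphism. -/
def cE : Equiv.Perm (List Bool) := ⟨cF, cF, fun s => (bcF_invol s).2, fun s => (bcF_invol s).2⟩

open scoped commutatorElement

/-- `x = [a,b]`. -/
def xE : Equiv.Perm (List Bool) := ⁅aE, bE⁆
/-- `y = [b,c]`. -/
def yE : Equiv.Perm (List Bool) := ⁅bE, cE⁆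
/-- `z = a y a`. -/
def zE : Equiv.Perm (List Bool) := aE * yE * aE
/-- `t = c x c y⁻¹ x⁻¹`. -/
def tE : Equiv.Perm (List Bool) := cE * xE * cE * yE⁻¹ * xE⁻¹
/-- `w = a t a`. -/
def wE : Equiv.Perm (List Bool) := aE * tE * aE


lemma aF_aF (s : List Bool) : aF (aF s) = s := aF_invol s
lemma bF_bF (s : List Bool) : bF (bF s) = s := (bcF_invol s).1
lemma cF_cF (s : List Bool) : cF (cF s) = s := (bcF_invol s).2
lemma aF_nil : aF [] = [] := rfl
lemma bF_nil : bF [] = [] := rfl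
lemma cF_nil : cF [] = [] := rfl
lemma aF_cons (x : Bool) (s : List Bool) : aF (x :: s) = (!x) :: s := rfl
lemma bF_false (s : List Bool) : bF (false :: s) = false :: aF s := rfl
lemma bF_true (s : List Bool) : bF (true :: s) = true :: cF s := rfl
lemma cF_false (s : List Bool) : cF (false :: s) = false :: bF s := rfl
lemma cF_true (s : List Bool) : cF (true :: s) = true :: s := rfl
lemma aE_apply (s : List Bool) : aE s = aF s := rfl
lemma bE_apply (s : List Bool) : bE s = bF s := rfl
lemma cE_apply (s : List Bool) : cE s = cF s := rfl
lemma aE_inv : aE⁻¹ = aE := Equiv.ext fun _ => rfl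
lemma bE_inv : bE⁻¹ = bE := Equiv.ext fun _ => rfl
lemma cE_inv : cE⁻¹ = cE := Equiv.ext fun _ => rfl

/-- The conjugation relations among the generators `x,y,z,t,w` of the
branching subgroup `K` of `IMG(z²+i)` under conjugation by `a`, `b`, `c`. -/
theorem stmt_13 :
    (aE * xE * aE = xE⁻¹ ∧ bE * xE * bE = xE⁻¹ ∧ cE * xE * cE = tE * xE * yE) ∧
    (aE * yE * aE = zE ∧ bE * yE * bE = yE⁻¹ ∧ cE * yE * cE = yE⁻¹) ∧
    (aE * zE * aE = yE ∧ bE * zE * bE = xE⁻¹ * zE⁻¹ * xE ∧ cE * zE * cE = zE) ∧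
    (aE * tE * aE = wE ∧ bE * tE * bE = xE⁻¹ * tE⁻¹ * xE ∧ cE * tE * cE = tE⁻¹) ∧
    (aE * wE * aE = tE ∧ bE * wE * bE = wE⁻¹ ∧ cE * wE * cE = wE) := by
  refine ⟨⟨?_, ?_, ?_⟩, ⟨?_, ?_, ?_⟩, ⟨?_, ?_, ?_⟩, ⟨?_, ?_, ?_⟩, ⟨?_, ?_, ?_⟩⟩ <;>
  · refine Equiv.ext fun s => ?_
    rcases s with _ | ⟨_ | _, s⟩ <;>
      simp [xE, yE, zE, tE, wE, commutatorElement_def, mul_inv_rev,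
        aE_inv, bE_inv, cE_inv, Equiv.Perm.mul_apply,
        aE_apply, bE_apply, cE_apply, aF_cons, bF_false, bF_true,
        cF_false, cF_true, aF_nil, bF_nil, cF_nil, aF_aF, bF_bF, cF_cF]
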